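/- Let A, B be abelian groups and f : A → B, g : B → A homomorphisms with g ∘ f = 2·id_A and f ∘ g = 2·id_B. Suppose moreover there is an exact sequence 0 → C → X → Ker g → 0 and an exact sequence 0 → Coker f → X' → K → 0 together with an isomorphism X ≅ X' compatible with the maps (as in the comparison of norm-one and projective groups when G(2) = 0). Then there exists an exact sequence 0 → Ker β → C → K → Coker β → 0, where β : Coker f → Ker g is the induced map. -/
import Mathlib


/-- Abstract form of Theorem 6.2: `f, g` play the roles of restriction and
corestriction with `g∘f = 2` and `f∘g = 2`; given exact sequences
`0 → C → X → Ker g → 0` and `0 → Coker f → X' → K → 0` and an isomorphism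
`e : X' ≅ X`, the induced map `β : Coker f → Ker g` (namely `aX ∘ e ∘ q`) fits
into an exact sequence `0 → Ker β → C → K → Coker β → 0`, the middle map being
the induced map `γ = pd ∘ e⁻¹ ∘ δ`. -/
theorem stmt4 {A B C X X' K : Type*} [AddCommGroup A] [AddCommGroup B] [AddCommGroup C]
    [AddCommGroup X] [AddCommGroup X'] [AddCommGroup K]
    (f : A →+ B) (g : B →+ A) (hgf : ∀ a : A, g (f a) = 2 • a)
    (hfg : ∀ b : B, f (g b) = 2 • b)
    (δ : C →+ X) (aX : X →+ g.ker) (hδ : Function.Injective δ)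
    (ha : Function.Surjective aX) (hex1 : Function.Exact δ aX)
    (q : (B ⧸ f.range) →+ X') (pd : X' →+ K) (hq : Function.Injective q)
    (hpd : Function.Surjective pd) (hex2 : Function.Exact q pd)
    (e : X' ≃+ X) :
    ∀ (β : (B ⧸ f.range) →+ g.ker) (γ : C →+ K),
      β = aX.comp (e.toAddMonoidHom.comp q) →
      γ = pd.comp (e.symm.toAddMonoidHom.comp δ) →
      ∃ (ι : β.ker →+ C) (p : K →+ (g.ker ⧸ β.range)),
        Function.Injective ι ∧
        (∀ x : β.ker, δ (ι x) = e (q (x : B ⧸ f.range))) ∧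
        Function.Exact ι γ ∧
        (∀ x' : X', p (pd x') = QuotientAddGroup.mk (aX (e x'))) ∧
        Function.Exact γ p ∧ Function.Surjective p := by
  intro β γ hβ hγ
  subst hβ hγ
  set β := aX.comp (e.toAddMonoidHom.comp q) with hβ
  set γ := pd.comp (e.symm.toAddMonoidHom.comp δ) with hγ
  have hβ' : ∀ b, β b = aX (e (q b)) := fun _ => rfl
  have hγ' : ∀ c, γ c = pd (e.symm (δ c)) := fun _ => rfl
  -- construct ι
  have hker : ∀ x : β.ker, ∃ c : C, δ c = e (q (x : B ⧸ f.range)) := by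
    intro x
    have hx : aX (e (q (x : B ⧸ f.range))) = 0 := x.2
    exact (hex1 _).mp hx
  choose ι0 hι0 using hker
  have hadd : ∀ x y : β.ker, ι0 (x + y) = ι0 x + ι0 y := by
    intro x y
    apply hδ
    rw [map_add, hι0, hι0, hι0]
    push_cast
    rw [map_add, map_add]
  have hzero : ι0 0 = 0 := by
    apply hδ
    rw [hι0]
    simp
  let ι : β.ker →+ C := { toFun := ι0, map_zero' := hzero, map_add' := hadd }
  have hι : ∀ x : β.ker, δ (ι x) = e (q (x : B ⧸ f.range)) := hι0
  -- construct p
  let φ : X' →+ (g.ker ⧸ β.range) := (QuotientAddGroup.mk' β.range).comp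
    (aX.comp e.toAddMonoidHom)
  have hφ : pd.ker ≤ φ.ker := by
    intro x' hx'
    have hx'' : x' ∈ Set.range q := (hex2 x').mp hx'
    obtain ⟨b, rfl⟩ := hx''
    show (QuotientAddGroup.mk' β.range) (aX (e (q b))) = 0
    rw [QuotientAddGroup.mk'_apply, QuotientAddGroup.eq_zero_iff]
    exact ⟨b, rfl⟩
  let p : K →+ (g.ker ⧸ β.range) :=
    pd.liftOfRightInverse (Function.surjInv hpd) (Function.rightInverse_surjInv hpd) ⟨φ, hφ⟩
  have hp : ∀ x' : X', p (pd x') = QuotientAddGroup.mk (aX (e x')) := by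
    intro x'
    exact pd.liftOfRightInverse_comp_apply _ _ ⟨φ, hφ⟩ x'
  refine ⟨ι, p, ?_, hι, ?_, hp, ?_, ?_⟩
  · -- ι injective
    intro x y hxy
    have h2 : δ (ι x) = δ (ι y) := congrArg δ hxy
    rw [hι, hι] at h2
    exact Subtype.ext (hq (e.injective h2))
  · -- Exact ι γ
    intro c
    constructor
    · intro hc
      rw [hγ'] at hc
      have hc' : e.symm (δ c) ∈ Set.range q := (hex2 _).mp hc
      obtain ⟨b, hb⟩ := hc'
      have hb' : e (q b) = δ c := by rw [hb]; simp
      have hbker : b ∈ β.ker := by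
        show aX (e (q b)) = 0
        rw [hb']
        exact (hex1 _).mpr ⟨c, rfl⟩
      refine ⟨⟨b, hbker⟩, ?_⟩
      apply hδ
      rw [hι]
      exact hb'
    · rintro ⟨x, rfl⟩
      rw [hγ']
      have := hι x
      rw [this]
      simp only [AddEquiv.symm_apply_apply]
      exact (hex2 _).mpr ⟨_, rfl⟩
  · -- Exact γ p
    intro k
    constructor
    · intro hk
      obtain ⟨x', rfl⟩ := hpd k
      have h0 : (QuotientAddGroup.mk (aX (e x')) : g.ker ⧸ β.range) = 0 := by
        rw [← hp]; exact hk
      rw [QuotientAddGroup.eq_zero_iff] at h0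
      obtain ⟨b, hb⟩ := h0
      have hβb : aX (e (q b)) = aX (e x') := hb
      have haX : aX (e x' - e (q b)) = 0 := by rw [map_sub, hβb, sub_self]
      obtain ⟨c, hc⟩ := (hex1 _).mp haX
      refine ⟨c, ?_⟩
      rw [hγ', hc]
      have hq0 : pd (q b) = 0 := (hex2 _).mpr ⟨b, rfl⟩
      simp only [map_sub, AddEquiv.symm_apply_apply, hq0, sub_zero]
    · rintro ⟨c, rfl⟩
      rw [hγ', hp]
      simp only [AddEquiv.apply_symm_apply]
      rw [show (QuotientAddGroup.mk (aX (δ c)) : g.ker ⧸ β.range) = 0 from ?_]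
      rw [QuotientAddGroup.eq_zero_iff]
      have h0 : aX (δ c) = 0 := (hex1 _).mpr ⟨c, rfl⟩
      rw [h0]
      exact zero_mem _
  · -- p surjective
    intro z
    obtain ⟨y, rfl⟩ := QuotientAddGroup.mk'_surjective β.range z
    obtain ⟨x, hx⟩ := ha y
    refine ⟨pd (e.symm x), ?_⟩
    rw [hp]
    simp [hx]
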